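/- Security for Bob over a binary erasure channel: fix n ≥ 1, k ≥ 1 and p ∈ (0,1). Let E = (E₁,…,Eₙ) be i.i.d. Bernoulli(p) random variables (Eᵢ = 1 meaning position i is erased), and let Z be uniform on {0,1} and independent of E. Condition on the event 𝒜 that |{i : Eᵢ = 1}| ≥ k and |{i : Eᵢ = 0}| ≥ k. Given (Z, E) on 𝒜, let S_Z be uniformly distributed over the k-element subsets of {i : Eᵢ = 0} and let S_{1−Z} be uniformly distributed over the k-element subsets of {i : Eᵢ = 1}, with S_Z and S_{1−Z} conditionally independent given (Z, E). Then, under the probability measure conditioned on 𝒜, the pair (S₀, S₁) is independent of Z; equivalently, I(Z; (S₀, S₁)) = 0. -/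
import Mathlib


open scoped BigOperators Classical

noncomputable section

namespace OT

variable {Ω : Type*} [Fintype Ω]

/-- Probability of an event under a pmf on a finite sample space. -/
def pr (μ : Ω → ℝ) (s : Set Ω) : ℝ := ∑ ω, s.indicator μ ω

/-- `q` is a probability mass function on a finite type. -/
def isDist {α : Type*} [Fintype α] (q : α → ℝ) : Prop := (∀ a, 0 ≤ q a) ∧ ∑ a, q a = 1

/-- Distribution (pmf) of a random variable. -/
def dst {α : Type*} (μ : Ω → ℝ) (X : Ω → α) : α → ℝ := fun a => pr μ {ω | X ω = a}

/-- Joint distribution of two random variables. -/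
def jd {α β : Type*} (μ : Ω → ℝ) (X : Ω → α) (Y : Ω → β) : α × β → ℝ :=
  fun q => pr μ {ω | X ω = q.1 ∧ Y ω = q.2}

/-- Conditional pmf given an event. -/
def cnd (μ : Ω → ℝ) (s : Set Ω) : Ω → ℝ := fun ω => s.indicator μ ω / pr μ s

/-- Shannon entropy (in bits) of a pmf on a finite type. -/
def entD {α : Type*} [Fintype α] (q : α → ℝ) : ℝ := ∑ a, -(q a * Real.logb 2 (q a))

/-- Shannon entropy (in bits) of a random variable. -/
def ent {α : Type*} [Fintype α] (μ : Ω → ℝ) (X : Ω → α) : ℝ := entD (dst μ X)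

/-- Conditional Shannon entropy `H(X|Y)` (in bits). -/
def condEnt {α β : Type*} [Fintype α] [Fintype β] (μ : Ω → ℝ) (X : Ω → α) (Y : Ω → β) : ℝ :=
  ent μ (fun ω => (X ω, Y ω)) - ent μ Y

/-- Mutual information `I(X;Y)` (in bits). -/
def mi {α β : Type*} [Fintype α] [Fintype β] (μ : Ω → ℝ) (X : Ω → α) (Y : Ω → β) : ℝ :=
  ent μ X + ent μ Y - ent μ (fun ω => (X ω, Y ω))

/-- Conditional mutual information `I(X;Y|Z)` (in bits). -/
def cmi {α β γ : Type*} [Fintype α] [Fintype β] [Fintype γ]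
    (μ : Ω → ℝ) (X : Ω → α) (Y : Ω → β) (Z : Ω → γ) : ℝ :=
  ent μ (fun ω => (X ω, Z ω)) + ent μ (fun ω => (Y ω, Z ω))
    - ent μ (fun ω => (X ω, Y ω, Z ω)) - ent μ Z

/-- Rényi entropy of order two (in bits). -/
def ren2 {α : Type*} [Fintype α] (μ : Ω → ℝ) (X : Ω → α) : ℝ :=
  Real.logb 2 (1 / ∑ a, (dst μ X a) ^ 2)

/-- Statistical (total variation) distance between two pmfs. -/
def sd {α : Type*} [Fintype α] (q q' : α → ℝ) : ℝ := (∑ a, |q a - q' a|) / 2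

/-- Conditional min-entropy `H∞(X|Y)` of a joint pmf (in bits):
the minimum over `(a,b)` in the support of `log₂ (P(Y=b) / P(X=a, Y=b))`. -/
def minEnt {α β : Type*} [Fintype α] [Fintype β] (q : α × β → ℝ) : ℝ :=
  sInf {r | ∃ a b, 0 < q (a, b) ∧ r = Real.logb 2 ((∑ a', q (a', b)) / q (a, b))}

/-- `ε`-smooth conditional min-entropy of a joint pmf (in bits). -/
def sminEnt {α β : Type*} [Fintype α] [Fintype β] (q : α × β → ℝ) (ε : ℝ) : ℝ :=
  sSup {r | ∃ q' : α × β → ℝ, isDist q' ∧ sd q q' ≤ ε ∧ r = minEnt q'}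

/-- Conditional zero-entropy `H₀(X|Y)` of a joint pmf (in bits). -/
def zeroEnt {α β : Type*} [Fintype α] [Fintype β] (q : α × β → ℝ) : ℝ :=
  sSup {r | ∃ b, 0 < ∑ a, q (a, b) ∧
    r = Real.logb 2 ((Finset.univ.filter fun a => 0 < q (a, b)).card)}

end OT

namespace OTProof
open OT Finset

variable {Ω : Type*} [Fintype Ω]

lemma pr_def (μ : Ω → ℝ) (s : Set Ω) : pr μ s = ∑ ω, if ω ∈ s then μ ω else 0 := by
  unfold pr; apply Finset.sum_congr rfl; intro ω _; simp [Set.indicator_apply]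

lemma pr_nonneg {μ : Ω → ℝ} (h : ∀ ω, 0 ≤ μ ω) (s : Set Ω) : 0 ≤ pr μ s := by
  rw [pr_def]
  exact Finset.sum_nonneg fun ω _ => by split <;> simp [h ω]

lemma pr_mono {μ : Ω → ℝ} (h : ∀ ω, 0 ≤ μ ω) {s t : Set Ω} (hst : s ⊆ t) :
    pr μ s ≤ pr μ t := by
  rw [pr_def, pr_def]
  apply Finset.sum_le_sum
  intro ω _
  by_cases hω : ω ∈ s
  · simp [hω, hst hω]
  · simp only [hω, if_false]
    split <;> simp [h ω]

lemma pr_congr {μ : Ω → ℝ} {s t : Set Ω} (h : s = t) : pr μ s = pr μ t := by rw [h]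

lemma cnd_apply (μ : Ω → ℝ) (s : Set Ω) (ω : Ω) :
    cnd μ s ω = (if ω ∈ s then μ ω else 0) / pr μ s := by
  simp [cnd, Set.indicator_apply]

lemma pr_cnd (μ : Ω → ℝ) (s t : Set Ω) :
    pr (cnd μ s) t = pr μ (t ∩ s) / pr μ s := by
  rw [pr_def, pr_def, Finset.sum_div]
  apply Finset.sum_congr rfl
  intro ω _
  rw [cnd_apply]
  by_cases h1 : ω ∈ t <;> by_cases h2 : ω ∈ s <;> simp [h1, h2, Set.mem_inter_iff]

lemma isDist_cnd {μ : Ω → ℝ} (hμ : ∀ ω, 0 ≤ μ ω) {s : Set Ω} (hs : 0 < pr μ s) :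
    isDist (cnd μ s) := by
  constructor
  · intro ω
    rw [cnd_apply]
    apply div_nonneg _ hs.le
    split <;> simp [hμ ω]
  · have h2 : ∑ ω, cnd μ s ω = pr (cnd μ s) Set.univ := by
      rw [pr_def]
      apply Finset.sum_congr rfl
      intro ω _; simp
    rw [h2, pr_cnd, Set.univ_inter, div_self hs.ne']

lemma sum_dst {α : Type*} [Fintype α] {μ : Ω → ℝ} (hμ : isDist μ) (X : Ω → α) :
    ∑ a, dst μ X a = 1 := by
  unfold dst
  rw [← hμ.2]
  simp only [pr_def]
  rw [Finset.sum_comm]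
  apply Finset.sum_congr rfl
  intro ω _
  simp [Set.mem_setOf_eq]

lemma pr_fiber {γ : Type*} [Fintype γ] (μ : Ω → ℝ) (s : Set Ω) (Y : Ω → γ) :
    pr μ s = ∑ y, pr μ {ω | ω ∈ s ∧ Y ω = y} := by
  simp only [pr_def]
  rw [Finset.sum_comm]
  apply Finset.sum_congr rfl
  intro ω _
  by_cases hω : ω ∈ s <;> simp [Set.mem_setOf_eq, hω]

lemma mi_eq_zero {α β : Type*} [Fintype α] [Fintype β] (μ : Ω → ℝ) (hμ : isDist μ)
    (X : Ω → α) (Y : Ω → β)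
    (h : ∀ x y, jd μ X Y (x, y) = dst μ X x * dst μ Y y) : mi μ X Y = 0 := by
  have hdj : ∀ x y, dst μ (fun ω => (X ω, Y ω)) (x, y) = dst μ X x * dst μ Y y := by
    intro x y
    rw [← h x y]
    unfold dst jd
    apply pr_congr
    ext ω
    simp [Prod.ext_iff]
  have hX : ∑ x, dst μ X x = 1 := sum_dst hμ X
  have hY : ∑ y, dst μ Y y = 1 := sum_dst hμ Y
  have key : ent μ (fun ω => (X ω, Y ω)) = ent μ X + ent μ Y := by
    unfold ent entD
    rw [Fintype.sum_prod_type]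
    have : ∀ x y, -(dst μ (fun ω => (X ω, Y ω)) (x, y) *
        Real.logb 2 (dst μ (fun ω => (X ω, Y ω)) (x, y)))
        = dst μ Y y * -(dst μ X x * Real.logb 2 (dst μ X x))
          + dst μ X x * -(dst μ Y y * Real.logb 2 (dst μ Y y)) := by
      intro x y
      rw [hdj]
      by_cases hx : dst μ X x = 0
      · simp [hx]
      by_cases hy : dst μ Y y = 0
      · simp [hy]
      rw [Real.logb_mul hx hy]
      ring
    simp only [this]
    have e1 : ∀ x : α, ∑ y : β, (dst μ Y y * -(dst μ X x * Real.logb 2 (dst μ X x))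
        + dst μ X x * -(dst μ Y y * Real.logb 2 (dst μ Y y)))
        = -(dst μ X x * Real.logb 2 (dst μ X x))
          + dst μ X x * (∑ y : β, -(dst μ Y y * Real.logb 2 (dst μ Y y))) := by
      intro x
      rw [Finset.sum_add_distrib, ← Finset.sum_mul, hY, one_mul, ← Finset.mul_sum]
    simp only [e1]
    rw [Finset.sum_add_distrib, ← Finset.sum_mul, hX, one_mul]
  unfold mi
  rw [key]; ring

end OTProof
namespace OTProof
open OT Finset

lemma pr_empty {Ω : Type*} [Fintype Ω] (μ : Ω → ℝ) : pr μ (∅ : Set Ω) = 0 := by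
  simp [pr_def]

end OTProof


open OT OTProof

/-- security for Bob over a binary erasure channel: let `E` be an i.i.d.
Bernoulli(p) erasure pattern, `Z` a uniform bit independent of `E`; condition on the
event `𝒜` that there are at least `k` erased and at least `k` non-erased positions;
given `(Z,E)` let `S_Z` be uniform over `k`-subsets of the non-erased positions and
`S_{1−Z}` uniform over `k`-subsets of the erased positions, conditionally independent
given `(Z,E)`.  Then, under the conditional measure given `𝒜`, the announced pair
`(S₀,S₁)` is independent of `Z`, i.e. `I(Z;(S₀,S₁)) = 0`. -/
theorem statement14 {Ω : Type*} [Fintype Ω] (n k : ℕ) (hn : 1 ≤ n) (hk : 1 ≤ k)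
    (p : ℝ) (hp0 : 0 < p) (hp1 : p < 1)
    (μ : Ω → ℝ) (hμ : isDist μ)
    (E : Ω → Fin n → Bool) (Z : Ω → Bool) (SZ SB : Ω → Finset (Fin n))
    (hE : ∀ e : Fin n → Bool, dst μ E e = ∏ i, (if e i then p else 1 - p))
    (hZE : ∀ z e, jd μ Z E (z, e) = (1 / 2) * dst μ E e)
    (𝒜 : Set Ω)
    (h𝒜 : 𝒜 = {ω | k ≤ (Finset.univ.filter fun i => E ω i = true).card ∧
                    k ≤ (Finset.univ.filter fun i => E ω i = false).card})
    (h𝒜pos : 0 < pr μ 𝒜)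
    (hS : ∀ z e, 0 < jd (cnd μ 𝒜) Z E (z, e) →
      ∀ a b : Finset (Fin n),
        pr (cnd μ 𝒜) {ω | SZ ω = a ∧ SB ω = b ∧ Z ω = z ∧ E ω = e}
          = jd (cnd μ 𝒜) Z E (z, e)
            * (if a ∈ Finset.powersetCard k (Finset.univ.filter fun i => e i = false)
                then (1 : ℝ) /
                  (Finset.powersetCard k (Finset.univ.filter fun i => e i = false)).card
                else 0)
            * (if b ∈ Finset.powersetCard k (Finset.univ.filter fun i => e i = true)
                then (1 : ℝ) /
                  (Finset.powersetCard k (Finset.univ.filter fun i => e i = true)).card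
                else 0)) :
    mi (cnd μ 𝒜) Z
      (fun ω => (if Z ω then SB ω else SZ ω, if Z ω then SZ ω else SB ω)) = 0 := by
  classical
  set μ' := cnd μ 𝒜 with hμ'def
  have hμ'dist : isDist μ' := isDist_cnd hμ.1 h𝒜pos
  have hμ'nn : ∀ ω, 0 ≤ μ' ω := hμ'dist.1
  set W : Ω → Finset (Fin n) × Finset (Fin n) :=
    fun ω => (if Z ω then SB ω else SZ ω, if Z ω then SZ ω else SB ω) with hWdef
  set good : (Fin n → Bool) → Prop := fun e =>
    k ≤ (Finset.univ.filter fun i => e i = true).card ∧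
    k ≤ (Finset.univ.filter fun i => e i = false).card with hgooddef
  set u : (Fin n → Bool) → Finset (Fin n) → ℝ := fun e a =>
    if a ∈ Finset.powersetCard k (Finset.univ.filter fun i => e i = false)
      then (1 : ℝ) / (Finset.powersetCard k (Finset.univ.filter fun i => e i = false)).card
      else 0 with hudef
  set v : (Fin n → Bool) → Finset (Fin n) → ℝ := fun e b =>
    if b ∈ Finset.powersetCard k (Finset.univ.filter fun i => e i = true)
      then (1 : ℝ) / (Finset.powersetCard k (Finset.univ.filter fun i => e i = true)).card
      else 0 with hvdef
  -- Step 1: conditional joint law of (Z, E)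
  have h1 : ∀ z e, jd μ' Z E (z, e) =
      if good e then (1 / 2) * (∏ i, if e i then p else 1 - p) / pr μ 𝒜 else 0 := by
    intro z e
    have hjd : jd μ' Z E (z, e) = pr μ ({ω | Z ω = z ∧ E ω = e} ∩ 𝒜) / pr μ 𝒜 := by
      unfold jd
      rw [hμ'def, pr_cnd]
    by_cases hg : good e
    · have hset : {ω | Z ω = z ∧ E ω = e} ∩ 𝒜 = {ω | Z ω = z ∧ E ω = e} := by
        apply Set.inter_eq_left.mpr
        intro ω hω
        rw [h𝒜]
        simp only [Set.mem_setOf_eq]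
        rw [hω.2]
        exact hg
      rw [hjd, hset, if_pos hg]
      have : pr μ {ω | Z ω = z ∧ E ω = e} = jd μ Z E (z, e) := rfl
      rw [this, hZE, hE]
    · have hset : {ω | Z ω = z ∧ E ω = e} ∩ 𝒜 = (∅ : Set Ω) := by
        ext ω
        simp only [Set.mem_inter_iff, Set.mem_setOf_eq, Set.mem_empty_iff_false, iff_false]
        rintro ⟨⟨hz, he⟩, hA⟩
        rw [h𝒜] at hA
        simp only [Set.mem_setOf_eq] at hA
        rw [he] at hA
        exact hg hA
      rw [hjd, hset, pr_empty, zero_div, if_neg hg]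
  -- Step 2: full joint law on each fiber
  have h2 : ∀ z e a b, pr μ' {ω | SZ ω = a ∧ SB ω = b ∧ Z ω = z ∧ E ω = e}
      = jd μ' Z E (z, e) * u e a * v e b := by
    intro z e a b
    by_cases hpos : 0 < jd μ' Z E (z, e)
    · exact hS z e hpos a b
    · have hnn : 0 ≤ jd μ' Z E (z, e) := pr_nonneg hμ'nn _
      have h0 : jd μ' Z E (z, e) = 0 := le_antisymm (not_lt.mp hpos) hnn
      have hle : pr μ' {ω | SZ ω = a ∧ SB ω = b ∧ Z ω = z ∧ E ω = e}
          ≤ jd μ' Z E (z, e) := by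
        apply pr_mono hμ'nn
        intro ω hω
        exact ⟨hω.2.2.1, hω.2.2.2⟩
      have hge : 0 ≤ pr μ' {ω | SZ ω = a ∧ SB ω = b ∧ Z ω = z ∧ E ω = e} :=
        pr_nonneg hμ'nn _
      rw [h0] at hle ⊢
      rw [le_antisymm hle hge]
      ring
  -- Step 3: joint law of (Z, W)
  have h3 : ∀ a b : Finset (Fin n), jd μ' Z W (false, (a, b))
      = ∑ e, jd μ' Z E (false, e) * u e a * v e b := by
    intro a b
    have hset : {ω | Z ω = false ∧ W ω = (a, b)}
        = {ω | SZ ω = a ∧ SB ω = b ∧ Z ω = false} := by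
      ext ω
      simp only [Set.mem_setOf_eq, hWdef, Prod.mk.injEq]
      constructor
      · rintro ⟨hz, hw1, hw2⟩
        rw [hz] at hw1 hw2
        simp only [Bool.false_eq_true, if_false] at hw1 hw2
        exact ⟨hw1, hw2, hz⟩
      · rintro ⟨ha, hb, hz⟩
        rw [hz]
        simp [ha, hb]
    have : jd μ' Z W (false, (a, b)) = pr μ' {ω | Z ω = false ∧ W ω = (a, b)} := rfl
    rw [this, hset, pr_fiber μ' _ E]
    apply Finset.sum_congr rfl
    intro e _
    rw [← h2 false e a b]
    apply pr_congr
    ext ω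
    simp only [Set.mem_setOf_eq]
    tauto
  have h4 : ∀ a b : Finset (Fin n), jd μ' Z W (true, (a, b))
      = ∑ e, jd μ' Z E (true, e) * u e b * v e a := by
    intro a b
    have hset : {ω | Z ω = true ∧ W ω = (a, b)}
        = {ω | SZ ω = b ∧ SB ω = a ∧ Z ω = true} := by
      ext ω
      simp only [Set.mem_setOf_eq, hWdef, Prod.mk.injEq]
      constructor
      · rintro ⟨hz, hw1, hw2⟩
        rw [hz] at hw1 hw2
        simp only [if_true] at hw1 hw2
        exact ⟨hw2, hw1, hz⟩
      · rintro ⟨hb, ha, hz⟩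
        rw [hz]
        simp [ha, hb]
    have : jd μ' Z W (true, (a, b)) = pr μ' {ω | Z ω = true ∧ W ω = (a, b)} := rfl
    rw [this, hset, pr_fiber μ' _ E]
    apply Finset.sum_congr rfl
    intro e _
    rw [← h2 true e b a]
    apply pr_congr
    ext ω
    simp only [Set.mem_setOf_eq]
    tauto
  -- Step 4: symmetry
  have h5 : ∀ a b : Finset (Fin n),
      (∑ e, jd μ' Z E (true, e) * u e b * v e a)
      = ∑ e, jd μ' Z E (false, e) * u e a * v e b := by
    intro a b
    set φ : (Fin n → Bool) → (Fin n → Bool) :=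
      fun e i => if i ∈ a ∪ b then !(e i) else e i with hφdef
    have hinv : Function.Involutive φ := by
      intro e
      funext i
      by_cases h : i ∈ a ∪ b
      · simp only [hφdef, if_pos h, Bool.not_not]
      · simp only [hφdef, if_neg h]
    apply Fintype.sum_bijective φ hinv.bijective
    intro e
    by_cases hcase : b ∈ Finset.powersetCard k (Finset.univ.filter fun i => e i = false) ∧
        a ∈ Finset.powersetCard k (Finset.univ.filter fun i => e i = true)
    · -- positive case
      obtain ⟨hbmem, hamem⟩ := hcase
      rw [Finset.mem_powersetCard] at hbmem hamem
      obtain ⟨hbsub, hbk⟩ := hbmem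
      obtain ⟨hasub, hak⟩ := hamem
      have haT : ∀ i ∈ a, e i = true := fun i hi => (Finset.mem_filter.mp (hasub hi)).2
      have hbF : ∀ i ∈ b, e i = false := fun i hi => (Finset.mem_filter.mp (hbsub hi)).2
      have hdisj : Disjoint a b := by
        rw [Finset.disjoint_left]
        intro i hia hib
        have h1 := haT i hia
        have h2 := hbF i hib
        rw [h1] at h2
        simp at h2
      have hphiA : ∀ i ∈ a, φ e i = false := by
        intro i hi
        simp only [hφdef, Finset.mem_union, hi, true_or, if_true, haT i hi, Bool.not_true]
      have hphiB : ∀ i ∈ b, φ e i = true := by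
        intro i hi
        simp only [hφdef, Finset.mem_union, hi, or_true, if_true, hbF i hi, Bool.not_false]
      have hphiC : ∀ i, i ∉ a ∪ b → φ e i = e i := by
        intro i hi
        simp only [hφdef, hi, if_false]
      have honesφ : (Finset.univ.filter fun i => φ e i = true)
          = ((Finset.univ.filter fun i => e i = true) \ a) ∪ b := by
        ext i
        simp only [Finset.mem_union, Finset.mem_sdiff, Finset.mem_filter, Finset.mem_univ,
          true_and]
        by_cases hia : i ∈ a
        · have hnb : i ∉ b := Finset.disjoint_left.mp hdisj hia
          simp [hphiA i hia, hia, hnb]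
        · by_cases hib : i ∈ b
          · simp [hphiB i hib, hib]
          · have : i ∉ a ∪ b := by simp [hia, hib]
            simp [hphiC i this, hia, hib]
      have hsub2 : a ⊆ Finset.univ.filter fun i => e i = true := hasub
      have hkle : k ≤ (Finset.univ.filter fun i => e i = true).card := by
        rw [← hak]; exact Finset.card_le_card hasub
      have hdisj2 : Disjoint ((Finset.univ.filter fun i => e i = true) \ a) b := by
        rw [Finset.disjoint_right]
        intro i hib
        simp only [Finset.mem_sdiff, Finset.mem_filter, Finset.mem_univ, true_and, not_and]
        intro h
        rw [hbF i hib] at h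
        exact absurd h (by simp)
      have hcard1 : (Finset.univ.filter fun i => φ e i = true).card
          = (Finset.univ.filter fun i => e i = true).card := by
        rw [honesφ, Finset.card_union_of_disjoint hdisj2, Finset.card_sdiff_of_subset hasub, hak, hbk,
          Nat.sub_add_cancel hkle]
      have hzeros : ∀ e' : Fin n → Bool, (Finset.univ.filter fun i => e' i = false)
          = (Finset.univ.filter fun i => e' i = true)ᶜ := by
        intro e'
        ext i
        simp [Finset.mem_compl]
      have hcard0 : (Finset.univ.filter fun i => φ e i = false).card
          = (Finset.univ.filter fun i => e i = false).card := by
        rw [hzeros, hzeros, Finset.card_compl, Finset.card_compl, hcard1]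
      have hgoodiff : good (φ e) = good e := by
        rw [hgooddef]
        simp only
        rw [hcard1, hcard0]
      have hprod : (∏ i, if φ e i then p else 1 - p) = ∏ i, if e i then p else 1 - p := by
        rw [← Finset.prod_mul_prod_compl (a ∪ b) (fun i => if φ e i then p else 1 - p),
          ← Finset.prod_mul_prod_compl (a ∪ b) (fun i => if e i then p else 1 - p)]
        congr 1
        · rw [Finset.prod_union hdisj, Finset.prod_union hdisj]
          have p1 : (∏ i ∈ a, if φ e i then p else 1 - p) = (1 - p) ^ k := by
            rw [← hak, ← Finset.prod_const]
            exact Finset.prod_congr rfl fun i hi => by rw [hphiA i hi]; simp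
          have p2 : (∏ i ∈ b, if φ e i then p else 1 - p) = p ^ k := by
            rw [← hbk, ← Finset.prod_const]
            exact Finset.prod_congr rfl fun i hi => by rw [hphiB i hi]; simp
          have p3 : (∏ i ∈ a, if e i then p else 1 - p) = p ^ k := by
            rw [← hak, ← Finset.prod_const]
            exact Finset.prod_congr rfl fun i hi => by rw [haT i hi]; simp
          have p4 : (∏ i ∈ b, if e i then p else 1 - p) = (1 - p) ^ k := by
            rw [← hbk, ← Finset.prod_const]
            exact Finset.prod_congr rfl fun i hi => by rw [hbF i hi]; simp
          rw [p1, p2, p3, p4]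
          ring
        · exact Finset.prod_congr rfl fun i hi => by
            rw [hphiC i (Finset.mem_compl.mp hi)]
      have hjdeq : jd μ' Z E (false, φ e) = jd μ' Z E (true, e) := by
        rw [h1, h1]
        simp only [hgoodiff, hprod]
      have huφ : u (φ e) a = u e b := by
        have hamem' : a ∈ Finset.powersetCard k (Finset.univ.filter fun i => φ e i = false) := by
          rw [Finset.mem_powersetCard]
          refine ⟨fun i hi => Finset.mem_filter.mpr ⟨Finset.mem_univ i, hphiA i hi⟩, hak⟩
        rw [hudef]
        simp only
        rw [if_pos hamem', if_pos (Finset.mem_powersetCard.mpr ⟨hbsub, hbk⟩),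
          Finset.card_powersetCard, Finset.card_powersetCard, hcard0]
      have hvφ : v (φ e) b = v e a := by
        have hbmem' : b ∈ Finset.powersetCard k (Finset.univ.filter fun i => φ e i = true) := by
          rw [Finset.mem_powersetCard]
          refine ⟨fun i hi => Finset.mem_filter.mpr ⟨Finset.mem_univ i, hphiB i hi⟩, hbk⟩
        rw [hvdef]
        simp only
        rw [if_pos hbmem', if_pos (Finset.mem_powersetCard.mpr ⟨hasub, hak⟩),
          Finset.card_powersetCard, Finset.card_powersetCard, hcard1]
      rw [hjdeq, huφ, hvφ]
    · -- degenerate case: both sides vanish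
      have hL : u e b * v e a = 0 := by
        by_contra hne
        have hub : u e b ≠ 0 := left_ne_zero_of_mul hne
        have hva : v e a ≠ 0 := right_ne_zero_of_mul hne
        apply hcase
        constructor
        · by_contra h
          rw [hudef] at hub
          simp only [h, if_neg, not_false_iff] at hub
          exact hub rfl
        · by_contra h
          rw [hvdef] at hva
          simp only [h, if_neg, not_false_iff] at hva
          exact hva rfl
      have hR : u (φ e) a * v (φ e) b = 0 := by
        by_contra hne
        have hua : u (φ e) a ≠ 0 := left_ne_zero_of_mul hne
        have hvb : v (φ e) b ≠ 0 := right_ne_zero_of_mul hne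
        have hamem : a ∈ Finset.powersetCard k (Finset.univ.filter fun i => φ e i = false) := by
          by_contra h
          rw [hudef] at hua
          simp only [h, if_neg, not_false_iff] at hua
          exact hua rfl
        have hbmem : b ∈ Finset.powersetCard k (Finset.univ.filter fun i => φ e i = true) := by
          by_contra h
          rw [hvdef] at hvb
          simp only [h, if_neg, not_false_iff] at hvb
          exact hvb rfl
        rw [Finset.mem_powersetCard] at hamem hbmem
        apply hcase
        constructor
        · rw [Finset.mem_powersetCard]
          refine ⟨fun i hi => Finset.mem_filter.mpr ⟨Finset.mem_univ i, ?_⟩, hbmem.2⟩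
          have h1 := (Finset.mem_filter.mp (hbmem.1 hi)).2
          simp only [hφdef, Finset.mem_union, hi, or_true, if_true] at h1
          simpa using h1
        · rw [Finset.mem_powersetCard]
          refine ⟨fun i hi => Finset.mem_filter.mpr ⟨Finset.mem_univ i, ?_⟩, hamem.2⟩
          have h1 := (Finset.mem_filter.mp (hamem.1 hi)).2
          simp only [hφdef, Finset.mem_union, hi, true_or, if_true] at h1
          simpa using h1
      rw [mul_assoc, mul_assoc, hL, hR, mul_zero, mul_zero]
  -- Step 5: marginal of Z
  have hZfiber : ∀ z, dst μ' Z z = ∑ e, jd μ' Z E (z, e) := by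
    intro z
    unfold dst jd
    rw [pr_fiber μ' _ E]
    apply Finset.sum_congr rfl
    intro e _
    apply pr_congr
    ext ω
    simp [Set.mem_setOf_eq]
  have h6 : ∀ z, dst μ' Z z = 1 / 2 := by
    have heq : dst μ' Z true = dst μ' Z false := by
      rw [hZfiber, hZfiber]
      apply Finset.sum_congr rfl
      intro e _
      rw [h1, h1]
    have hsum : dst μ' Z false + dst μ' Z true = 1 := by
      have := sum_dst hμ'dist Z
      rwa [Fintype.sum_bool, add_comm] at this
    intro z
    cases z <;> linarith
  -- Step 6: marginal of W
  have h7 : ∀ a b : Finset (Fin n), dst μ' W (a, b)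
      = jd μ' Z W (false, (a, b)) + jd μ' Z W (true, (a, b)) := by
    intro a b
    unfold dst
    rw [pr_fiber μ' _ Z, Fintype.sum_bool, add_comm]
    congr 1 <;> · apply pr_congr; ext ω; simp [Set.mem_setOf_eq, jd]; tauto
  -- Conclusion
  apply mi_eq_zero μ' hμ'dist Z W
  rintro z ⟨a, b⟩
  have hjoint : jd μ' Z W (z, (a, b)) = ∑ e, jd μ' Z E (false, e) * u e a * v e b := by
    cases z
    · exact h3 a b
    · rw [h4 a b]; exact h5 a b
  rw [hjoint, h6, h7 a b, h3 a b, h4 a b, h5 a b]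
  ring
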